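/- Fix T > 0, a real number f₀, and an integrable function g : [0,T] → ℝ. Define f(t) = f₀ + ∫₀ᵗ g(s) ds and F(t) = sup_{0 ≤ u ≤ t} f(u) for t ∈ [0,T]. Then F is nondecreasing and for every t ∈ [0,T], F(t) = f₀ + ∫₀ᵗ g(s)·1{f(s) = F(s)} ds. -/

import Mathlib

open MeasureTheory Set intervalIntegral Filter Topology

/-- Running-maximum identity: if `f(t) = f₀ + ∫₀ᵗ g(s) ds` with `g` integrable on `[0,T]`,
and `F(t) = sup_{0 ≤ u ≤ t} f(u)`, then `F` is nondecreasing on `[0,T]` and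
`F(t) = f₀ + ∫₀ᵗ g(s) · 1{f(s) = F(s)} ds` for every `t ∈ [0,T]`. -/
theorem running_max_integral (T : ℝ) (hT : 0 < T) (f₀ : ℝ) (g : ℝ → ℝ)
    (hg : IntegrableOn g (Icc 0 T))
    (f F : ℝ → ℝ)
    (hf : ∀ t : ℝ, f t = f₀ + ∫ s in (0 : ℝ)..t, g s)
    (hF : ∀ t : ℝ, F t = sSup (f '' Icc 0 t)) :
    MonotoneOn F (Icc 0 T) ∧
    ∀ t ∈ Icc (0 : ℝ) T,
      F t = f₀ + ∫ s in (0 : ℝ)..t, Set.indicator {s : ℝ | f s = F s} g s := by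
  classical
  -- interval integrability on subintervals
  have hii : ∀ a b : ℝ, 0 ≤ a → a ≤ b → b ≤ T → IntervalIntegrable g volume a b := by
    intro a b ha hab hb
    apply MeasureTheory.IntegrableOn.intervalIntegrable
    apply hg.mono_set
    rw [uIcc_of_le hab]
    exact Icc_subset_Icc ha hb
  -- fundamental theorem of calculus additivity
  have hftc : ∀ a b : ℝ, 0 ≤ a → a ≤ b → b ≤ T → f b - f a = ∫ s in a..b, g s := by
    intro a b ha hab hb
    rw [hf a, hf b, show (f₀ + ∫ s in (0:ℝ)..b, g s) - (f₀ + ∫ s in (0:ℝ)..a, g s)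
        = (∫ s in (0:ℝ)..b, g s) - (∫ s in (0:ℝ)..a, g s) by ring]
    exact integral_interval_sub_left (hii 0 b le_rfl (ha.trans hab) hb)
      (hii 0 a le_rfl ha (hab.trans hb))
  -- continuity of f
  have hfc : ContinuousOn f (Icc 0 T) := by
    have h1 : IntegrableOn g (uIcc 0 T) volume := by rwa [uIcc_of_le hT.le]
    have h2 := (continuousOn_const (c := f₀)).add (continuousOn_primitive_interval h1)
    rw [uIcc_of_le hT.le] at h2
    exact h2.congr fun y _ => hf y
  -- maximum attainment
  have hmax : ∀ t, t ∈ Icc (0:ℝ) T → ∃ p ∈ Icc (0:ℝ) t, F t = f p ∧ ∀ u ∈ Icc (0:ℝ) t, f u ≤ f p := by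
    intro t ht
    obtain ⟨p, hp, h1, h2⟩ := (isCompact_Icc (a := (0:ℝ)) (b := t)).exists_sSup_image_eq_and_ge
      (nonempty_Icc.2 ht.1) (hfc.mono (Icc_subset_Icc le_rfl ht.2))
    exact ⟨p, hp, by rw [hF t]; exact h1, h2⟩
  have hfF : ∀ t, t ∈ Icc (0:ℝ) T → ∀ u ∈ Icc (0:ℝ) t, f u ≤ F t := by
    intro t ht u hu
    obtain ⟨p, _, h1, h2⟩ := hmax t ht
    rw [h1]; exact h2 u hu
  have hfFt : ∀ t, t ∈ Icc (0:ℝ) T → f t ≤ F t := fun t ht => hfF t ht t ⟨ht.1, le_rfl⟩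
  have hF0 : F 0 = f 0 := by rw [hF 0, Icc_self, image_singleton, csSup_singleton]
  -- monotonicity
  have hFmono : ∀ a b : ℝ, 0 ≤ a → a ≤ b → b ≤ T → F a ≤ F b := by
    intro a b ha hab hb
    obtain ⟨p, _, _, h2⟩ := hmax b ⟨ha.trans hab, hb⟩
    rw [hF a, hF b]
    refine csSup_le_csSup ⟨f p, ?_⟩ ⟨f 0, mem_image_of_mem f (left_mem_Icc.2 ha)⟩
      (image_mono (f := f) (Icc_subset_Icc le_rfl hab))
    rintro y ⟨u, hu, rfl⟩
    exact h2 u hu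
  -- the primitive of |g| and estimates
  set H : ℝ → ℝ := fun u => ∫ s in (0:ℝ)..u, |g s| with hHdef
  have habs : IntegrableOn (fun s => |g s|) (Icc 0 T) := hg.abs
  have hiiabs : ∀ a b : ℝ, 0 ≤ a → a ≤ b → b ≤ T →
      IntervalIntegrable (fun s => |g s|) volume a b := by
    intro a b ha hab hb
    apply MeasureTheory.IntegrableOn.intervalIntegrable
    apply habs.mono_set
    rw [uIcc_of_le hab]
    exact Icc_subset_Icc ha hb
  have hHadd : ∀ a b : ℝ, 0 ≤ a → a ≤ b → b ≤ T → H b - H a = ∫ s in a..b, |g s| := by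
    intro a b ha hab hb
    exact integral_interval_sub_left (hiiabs 0 b le_rfl (ha.trans hab) hb)
      (hiiabs 0 a le_rfl ha (hab.trans hb))
  have hHmono : ∀ a b : ℝ, 0 ≤ a → a ≤ b → b ≤ T → H a ≤ H b := by
    intro a b ha hab hb
    have h1 := hHadd a b ha hab hb
    have h2 : (0:ℝ) ≤ ∫ s in a..b, |g s| :=
      intervalIntegral.integral_nonneg hab fun u _ => abs_nonneg (g u)
    linarith
  have hFest : ∀ a b : ℝ, 0 ≤ a → a ≤ b → b ≤ T → F b ≤ F a + (H b - H a) := by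
    intro a b ha hab hb
    obtain ⟨p, hp, h1, _⟩ := hmax b ⟨ha.trans hab, hb⟩
    rcases le_or_gt p a with hpa | hpa
    · have h2 : f p ≤ F a := hfF a ⟨ha, hab.trans hb⟩ p ⟨hp.1, hpa⟩
      have h3 : H a ≤ H b := hHmono a b ha hab hb
      linarith
    · have hpb : p ≤ b := hp.2
      have h3 : f p - f a = ∫ s in a..p, g s := hftc a p ha hpa.le (hpb.trans hb)
      have h4 : |∫ s in a..p, g s| ≤ ∫ s in a..p, |g s| :=
        intervalIntegral.abs_integral_le_integral_abs hpa.le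
      have h5 : H p - H a = ∫ s in a..p, |g s| := hHadd a p ha hpa.le (hpb.trans hb)
      have h6 : H p ≤ H b := hHmono p b (ha.trans hpa.le) hpb hb
      have h7 : f a ≤ F a := hfFt a ⟨ha, hab.trans hb⟩
      have h8 := le_abs_self (∫ s in a..p, g s)
      linarith
  -- continuity of F
  have hHc : ContinuousOn H (Icc 0 T) := by
    have h1 : IntegrableOn (fun s => |g s|) (uIcc 0 T) volume := by
      rw [uIcc_of_le hT.le]; exact habs
    have h2 := continuousOn_primitive_interval h1
    rwa [uIcc_of_le hT.le] at h2
  have hFc : ContinuousOn F (Icc 0 T) := by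
    have hdist : ∀ a ∈ Icc (0:ℝ) T, ∀ b ∈ Icc (0:ℝ) T, dist (F b) (F a) ≤ dist (H b) (H a) := by
      have base : ∀ a b : ℝ, 0 ≤ a → a ≤ b → b ≤ T → dist (F b) (F a) ≤ dist (H b) (H a) := by
        intro a b ha hab hb
        have h1 := hFest a b ha hab hb
        have h2 := hFmono a b ha hab hb
        have h3 := hHmono a b ha hab hb
        rw [Real.dist_eq, Real.dist_eq, abs_of_nonneg (by linarith), abs_of_nonneg (by linarith)]
        linarith
      intro a ha b hb
      rcases le_total a b with hab | hab
      · exact base a b ha.1 hab hb.2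
      · rw [dist_comm (F b), dist_comm (H b)]
        exact base b a hb.1 hab ha.2
    intro x hx
    have h1 : Tendsto (fun y => dist (H y) (H x)) (𝓝[Icc 0 T] x) (𝓝 0) :=
      tendsto_iff_dist_tendsto_zero.mp (hHc x hx)
    refine tendsto_iff_dist_tendsto_zero.mpr (squeeze_zero' ?_ ?_ h1)
    · exact Filter.Eventually.of_forall fun y => dist_nonneg
    · filter_upwards [self_mem_nhdsWithin] with y hy
      exact hdist x hx y hy
  -- the closed set where the max is attained
  set A' : Set ℝ := Icc 0 T ∩ (fun s => F s - f s) ⁻¹' {0} with hA'def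
  have hA'closed : IsClosed A' :=
    (hFc.sub hfc).preimage_isClosed_of_isClosed isClosed_Icc isClosed_singleton
  have hA'meas : MeasurableSet A' := hA'closed.measurableSet
  have hA'mem : ∀ s ∈ Icc (0:ℝ) T, (s ∈ A' ↔ f s = F s) := by
    intro s hs
    simp only [hA'def, mem_inter_iff, mem_preimage, mem_singleton_iff, sub_eq_zero]
    constructor
    · rintro ⟨-, h⟩; exact h.symm
    · intro h; exact ⟨hs, h.symm⟩
  -- Key lemma: the identity at times where the max is attained
  have key : ∀ t, t ∈ Icc (0:ℝ) T → f t = F t →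
      F t = f₀ + ∫ s in (0 : ℝ)..t, Set.indicator {s : ℝ | f s = F s} g s := by
    intro t ht hft
    -- the (relatively) open set where f is strictly below its running max
    set U : Set ℝ := Ioo 0 t ∩ (Ioo 0 T ∩ (fun s => F s - f s) ⁻¹' (Ioi 0)) with hUdef
    have hUopen : IsOpen U :=
      isOpen_Ioo.inter (((hFc.sub hfc).mono Ioo_subset_Icc_self).isOpen_inter_preimage
        isOpen_Ioo isOpen_Ioi)
    have hUsub : U ⊆ Ioo 0 t := inter_subset_left
    have hUchar : ∀ s, s ∈ U ↔ (s ∈ Ioo 0 t ∧ f s < F s) := by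
      intro s
      constructor
      · rintro ⟨h1, _, h3⟩
        exact ⟨h1, by simpa [sub_pos] using h3⟩
      · rintro ⟨h1, h2⟩
        exact ⟨h1, ⟨h1.1, lt_of_lt_of_le h1.2 ht.2⟩, by simpa [sub_pos] using h2⟩
    have hbd : ∀ s ∈ Icc (0:ℝ) t, s ∉ U → f s = F s := by
      intro s hs hsU
      rcases eq_or_lt_of_le hs.1 with h0 | h0
      · rw [← h0]; exact hF0.symm
      rcases eq_or_lt_of_le hs.2 with hts | hts
      · rw [hts]; exact hft
      by_contra hne
      exact hsU ((hUchar s).2 ⟨⟨h0, hts⟩,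
        lt_of_le_of_ne (hfFt s ⟨h0.le, hs.2.trans ht.2⟩) hne⟩)
    have hUc : IsClosed Uᶜ := hUopen.isClosed_compl
    have h0U : (0:ℝ) ∉ U := fun h => lt_irrefl 0 (hUsub h).1
    have htU : t ∉ U := fun h => lt_irrefl t (hUsub h).2
    -- component endpoints
    set aa : ℝ → ℝ := fun s => sSup (Uᶜ ∩ Iic s) with haadef
    set bb : ℝ → ℝ := fun s => sInf (Uᶜ ∩ Ici s) with hbbdef
    have haamem : ∀ s ∈ U, aa s ∈ Uᶜ ∩ Iic s := fun s hs =>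
      (hUc.inter isClosed_Iic).csSup_mem ⟨0, h0U, (hUsub hs).1.le⟩ ⟨s, fun y hy => hy.2⟩
    have hbbmem : ∀ s ∈ U, bb s ∈ Uᶜ ∩ Ici s := fun s hs =>
      (hUc.inter isClosed_Ici).csInf_mem ⟨t, htU, (hUsub hs).2.le⟩ ⟨s, fun y hy => hy.2⟩
    have haalt : ∀ s ∈ U, aa s < s := fun s hs =>
      lt_of_le_of_ne (haamem s hs).2 fun h => (haamem s hs).1 (by rw [h]; exact hs)
    have hbbgt : ∀ s ∈ U, s < bb s := fun s hs =>
      lt_of_le_of_ne (hbbmem s hs).2 fun h => (hbbmem s hs).1 (by rw [← h]; exact hs)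
    have haa0 : ∀ s ∈ U, 0 ≤ aa s := fun s hs =>
      le_csSup ⟨s, fun y hy => hy.2⟩ ⟨h0U, (hUsub hs).1.le⟩
    have hbbt : ∀ s ∈ U, bb s ≤ t := fun s hs =>
      csInf_le ⟨s, fun y hy => hy.2⟩ ⟨htU, (hUsub hs).2.le⟩
    have hIooU : ∀ s ∈ U, Ioo (aa s) (bb s) ⊆ U := by
      intro s hs u hu
      by_contra huU
      rcases le_total u s with h | h
      · have h2 : u ≤ aa s := le_csSup ⟨s, fun y hy => hy.2⟩ (⟨huU, h⟩ : u ∈ Uᶜ ∩ Iic s)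
        exact absurd h2 (not_le.2 hu.1)
      · have h2 : bb s ≤ u := csInf_le ⟨s, fun y hy => hy.2⟩ (⟨huU, h⟩ : u ∈ Uᶜ ∩ Ici s)
        exact absurd h2 (not_le.2 hu.2)
    have haaA : ∀ s ∈ U, f (aa s) = F (aa s) := fun s hs =>
      hbd (aa s) ⟨haa0 s hs, (haalt s hs).le.trans (hUsub hs).2.le⟩ (haamem s hs).1
    have hbbA : ∀ s ∈ U, f (bb s) = F (bb s) := fun s hs =>
      hbd (bb s) ⟨(hUsub hs).1.le.trans (hbbgt s hs).le, hbbt s hs⟩ (hbbmem s hs).1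
    -- F is constant on each component
    have hFconst : ∀ s ∈ U, ∀ u ∈ Ioo (aa s) (bb s), F u = F (aa s) := by
      intro s hs u hu
      have hu0 : (0:ℝ) ≤ u := (haa0 s hs).trans hu.1.le
      have hut : u ≤ T := (hu.2.le.trans (hbbt s hs)).trans ht.2
      obtain ⟨p, hp, h1, _⟩ := hmax u ⟨hu0, hut⟩
      rcases le_or_gt p (aa s) with hpa | hpa
      · have h2 : f p ≤ F (aa s) := hfF (aa s)
          ⟨haa0 s hs, ((haalt s hs).le.trans (hUsub hs).2.le).trans ht.2⟩ p ⟨hp.1, hpa⟩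
        have h3 : F (aa s) ≤ F u := hFmono (aa s) u (haa0 s hs) hu.1.le hut
        linarith
      · exfalso
        have hpU : p ∈ U := hIooU s hs ⟨hpa, lt_of_le_of_lt hp.2 hu.2⟩
        have h2 : f p < F p := ((hUchar p).1 hpU).2
        have h3 : F p ≤ F u := hFmono p u (hUsub hpU).1.le hp.2 hut
        linarith
    have hFab : ∀ s ∈ U, F (bb s) = F (aa s) := by
      intro s hs
      have hab : aa s < bb s := (haalt s hs).trans (hbbgt s hs)
      have hbbT : bb s ≤ T := (hbbt s hs).trans ht.2
      have h1 : Tendsto F (𝓝[Ioo (aa s) (bb s)] (bb s)) (𝓝 (F (bb s))) := by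
        refine Tendsto.mono_left (hFc (bb s) ⟨(hUsub hs).1.le.trans (hbbgt s hs).le, hbbT⟩) ?_
        apply nhdsWithin_mono
        intro u hu
        exact ⟨(haa0 s hs).trans hu.1.le, (hu.2.le.trans (hbbt s hs)).trans ht.2⟩
      have h2 : Tendsto F (𝓝[Ioo (aa s) (bb s)] (bb s)) (𝓝 (F (aa s))) := by
        refine Tendsto.congr' ?_ tendsto_const_nhds
        filter_upwards [self_mem_nhdsWithin] with u hu
        exact (hFconst s hs u hu).symm
      have hne : (𝓝[Ioo (aa s) (bb s)] (bb s)).NeBot := by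
        apply mem_closure_iff_nhdsWithin_neBot.1
        rw [closure_Ioo hab.ne]
        exact right_mem_Icc.2 hab.le
      exact tendsto_nhds_unique h1 h2
    -- the integral over each component vanishes
    have hcompint : ∀ s ∈ U, ∫ u in Ioo (aa s) (bb s), g u = 0 := by
      intro s hs
      have hab : aa s < bb s := (haalt s hs).trans (hbbgt s hs)
      have h1 : f (bb s) - f (aa s) = ∫ u in (aa s)..(bb s), g u :=
        hftc _ _ (haa0 s hs) hab.le ((hbbt s hs).trans ht.2)
      have h2 : f (bb s) - f (aa s) = 0 := by
        rw [haaA s hs, hbbA s hs, hFab s hs]; ring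
      rw [← integral_Ioc_eq_integral_Ioo, ← intervalIntegral.integral_of_le hab.le]
      linarith
    -- components are equal or disjoint
    have hcomp_eq : ∀ s ∈ U, ∀ x ∈ U, x ∈ Ioo (aa s) (bb s) → aa x = aa s ∧ bb x = bb s := by
      intro s hs x hx hxI
      constructor
      · refine le_antisymm ?_ (le_csSup ⟨x, fun y hy => hy.2⟩ ⟨(haamem s hs).1, hxI.1.le⟩)
        by_contra h
        push_neg at h
        exact (haamem x hx).1 (hIooU s hs ⟨h, lt_of_le_of_lt (haamem x hx).2 hxI.2⟩)
      · refine le_antisymm (csInf_le ⟨x, fun y hy => hy.2⟩ ⟨(hbbmem s hs).1, hxI.2.le⟩) ?_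
        by_contra h
        push_neg at h
        exact (hbbmem x hx).1 (hIooU s hs ⟨lt_of_lt_of_le hxI.1 (hbbmem x hx).2, h⟩)
    -- enumerate the components by rationals
    set e : ℕ ≃ ℚ := (Denumerable.eqv ℚ).symm with hedef
    set J : ℕ → Set ℝ := fun n =>
      if ((e n : ℚ) : ℝ) ∈ U ∧ ∀ m, m < n → ((e m : ℚ) : ℝ) ∉ Ioo (aa ((e n : ℚ) : ℝ)) (bb ((e n : ℚ) : ℝ))
      then Ioo (aa ((e n : ℚ) : ℝ)) (bb ((e n : ℚ) : ℝ)) else ∅ with hJdef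
    have hJU : ∀ n, J n ⊆ U := by
      intro n
      rw [hJdef]
      dsimp only
      split
      · next h => exact hIooU _ h.1
      · exact empty_subset U
    have hJmeas : ∀ n, MeasurableSet (J n) := by
      intro n
      rw [hJdef]
      dsimp only
      split
      · exact measurableSet_Ioo
      · exact MeasurableSet.empty
    have hJdisj : Pairwise (Function.onFun Disjoint J) := by
      have aux : ∀ m n, m < n → Disjoint (J m) (J n) := by
        intro m n hmn
        rw [Set.disjoint_left]
        intro x hxm hxn
        rw [hJdef] at hxm hxn
        dsimp only at hxm hxn
        split at hxm
        case isFalse => exact absurd hxm (notMem_empty x)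
        case isTrue hm =>
        split at hxn
        case isFalse => exact absurd hxn (notMem_empty x)
        case isTrue hn =>
        have hxU : x ∈ U := hIooU _ hm.1 hxm
        obtain ⟨ham, hbm⟩ := hcomp_eq _ hm.1 x hxU hxm
        obtain ⟨han, hbn⟩ := hcomp_eq _ hn.1 x hxU hxn
        refine hn.2 m hmn ?_
        rw [← han, ham, ← hbn, hbm]
        exact ⟨haalt _ hm.1, hbbgt _ hm.1⟩
      intro m n hmn
      rcases hmn.lt_or_gt with h | h
      · exact aux m n h
      · exact (aux n m h).symm
    have hJcover : U = ⋃ n, J n := by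
      refine Subset.antisymm ?_ (iUnion_subset hJU)
      intro s hs
      have hab : aa s < bb s := (haalt s hs).trans (hbbgt s hs)
      obtain ⟨q, hq1, hq2⟩ := exists_rat_btwn hab
      have hqU : ((q : ℚ) : ℝ) ∈ U := hIooU s hs ⟨hq1, hq2⟩
      have hex : ∃ n, ((e n : ℚ) : ℝ) ∈ Ioo (aa s) (bb s) := by
        refine ⟨e.symm q, ?_⟩
        rw [Equiv.apply_symm_apply]
        exact ⟨hq1, hq2⟩
      set N := Nat.find hex with hNdef
      have hN : ((e N : ℚ) : ℝ) ∈ Ioo (aa s) (bb s) := Nat.find_spec hex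
      have hNU : ((e N : ℚ) : ℝ) ∈ U := hIooU s hs hN
      obtain ⟨haN, hbN⟩ := hcomp_eq s hs _ hNU hN
      have hcond : ((e N : ℚ) : ℝ) ∈ U ∧ ∀ m, m < N →
          ((e m : ℚ) : ℝ) ∉ Ioo (aa ((e N : ℚ) : ℝ)) (bb ((e N : ℚ) : ℝ)) := by
        refine ⟨hNU, fun m hm hmem => ?_⟩
        rw [haN, hbN] at hmem
        exact Nat.find_min hex hm hmem
      refine mem_iUnion.2 ⟨N, ?_⟩
      rw [hJdef]
      dsimp only
      rw [if_pos hcond, haN, hbN]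
      exact ⟨haalt s hs, hbbgt s hs⟩
    -- the integral of g over U vanishes
    have hUsubT : U ⊆ Icc (0:ℝ) T := fun s hs =>
      ⟨(hUsub hs).1.le, ((hUsub hs).2.le).trans ht.2⟩
    have hintU : ∫ u in U, g u = 0 := by
      rw [hJcover, MeasureTheory.integral_iUnion hJmeas hJdisj ?_]
      · have hz : ∀ n, ∫ u in J n, g u = 0 := by
          intro n
          rw [hJdef]
          dsimp only
          split
          · next h => exact hcompint _ h.1
          · simp
        simp [hz]
      · rw [← hJcover]
        exact hg.mono_set hUsubT
    -- assemble
    have hIocA : Ioc 0 t \ A' = U := by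
      ext s
      simp only [mem_diff, mem_Ioc]
      constructor
      · rintro ⟨⟨h0, hst⟩, hA⟩
        have hsT : s ∈ Icc (0:ℝ) T := ⟨h0.le, hst.trans ht.2⟩
        have hne : f s ≠ F s := fun h => hA ((hA'mem s hsT).2 h)
        have hlt : f s < F s := lt_of_le_of_ne (hfFt s hsT) hne
        have hst' : s < t := lt_of_le_of_ne hst fun h => hne (by rw [h]; exact hft)
        exact (hUchar s).2 ⟨⟨h0, hst'⟩, hlt⟩
      · intro hs
        have h1 := (hUchar s).1 hs
        refine ⟨⟨h1.1.1, h1.1.2.le⟩, fun hA => ?_⟩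
        exact absurd ((hA'mem s (hUsubT hs)).1 hA) (ne_of_lt h1.2)
    have hIocT : Ioc (0:ℝ) t ⊆ Icc 0 T := fun s hs => ⟨hs.1.le, hs.2.trans ht.2⟩
    have h1 : ∫ s in (0:ℝ)..t, Set.indicator {s : ℝ | f s = F s} g s
        = ∫ s in Ioc (0:ℝ) t, Set.indicator {s : ℝ | f s = F s} g s :=
      intervalIntegral.integral_of_le ht.1
    have h2 : ∫ s in Ioc (0:ℝ) t, Set.indicator {s : ℝ | f s = F s} g s
        = ∫ s in Ioc (0:ℝ) t, A'.indicator g s := by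
      refine setIntegral_congr_fun measurableSet_Ioc fun s hs => ?_
      have hiff := hA'mem s (hIocT hs)
      by_cases h : f s = F s
      · rw [Set.indicator_of_mem (show s ∈ {s : ℝ | f s = F s} from h) g,
          Set.indicator_of_mem (hiff.2 h) g]
      · rw [Set.indicator_of_notMem (show s ∉ {s : ℝ | f s = F s} from h) g,
          Set.indicator_of_notMem (fun hh => h (hiff.1 hh)) g]
    have h3 : ∫ s in Ioc (0:ℝ) t, A'.indicator g s = ∫ s in Ioc (0:ℝ) t ∩ A', g s :=
      setIntegral_indicator hA'meas
    have h4 : (∫ s in Ioc (0:ℝ) t ∩ A', g s) + ∫ s in Ioc (0:ℝ) t \ A', g s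
        = ∫ s in Ioc (0:ℝ) t, g s :=
      integral_inter_add_diff hA'meas (hg.mono_set hIocT)
    have h5 : ∫ s in Ioc (0:ℝ) t \ A', g s = 0 := by rw [hIocA]; exact hintU
    have h6 : ∫ s in Ioc (0:ℝ) t, g s = ∫ s in (0:ℝ)..t, g s :=
      (intervalIntegral.integral_of_le ht.1).symm
    rw [← hft, hf t, h1, h2, h3]
    linarith
  constructor
  · intro a ha b hb hab
    exact hFmono a b ha.1 hab hb.2
  intro t ht
  set S : Set ℝ := Icc 0 t ∩ A' with hSdef
  have hSclosed : IsClosed S := isClosed_Icc.inter hA'closed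
  have h0S : (0:ℝ) ∈ S := ⟨⟨le_rfl, ht.1⟩, (hA'mem 0 ⟨le_rfl, hT.le⟩).2 hF0.symm⟩
  have hSbdd : BddAbove S := ⟨t, fun y hy => hy.1.2⟩
  set r := sSup S with hrdef
  have hrS : r ∈ S := hSclosed.csSup_mem ⟨0, h0S⟩ hSbdd
  have hr0 : 0 ≤ r := le_csSup hSbdd h0S
  have hrt : r ≤ t := hrS.1.2
  have hrT : r ≤ T := hrt.trans ht.2
  have hfr : f r = F r := (hA'mem r ⟨hr0, hrT⟩).1 hrS.2
  have hFtr : F t = F r := by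
    obtain ⟨p, hp, h1, _⟩ := hmax t ht
    have hfpF : f p = F p := le_antisymm (hfFt p ⟨hp.1, hp.2.trans ht.2⟩)
      (by rw [← h1]; exact hFmono p t hp.1 hp.2 ht.2)
    have hpS : p ∈ S := ⟨hp, (hA'mem p ⟨hp.1, hp.2.trans ht.2⟩).2 hfpF⟩
    have hpr : p ≤ r := le_csSup hSbdd hpS
    have h2 : f p ≤ F r := hfF r ⟨hr0, hrT⟩ p ⟨hp.1, hpr⟩
    have h3 : F r ≤ F t := hFmono r t hr0 hrt ht.2
    linarith
  have hind : ∀ a b : ℝ, 0 ≤ a → a ≤ b → b ≤ t →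
      IntervalIntegrable (Set.indicator {s : ℝ | f s = F s} g) volume a b := by
    intro a b ha hab hb
    rw [intervalIntegrable_iff_integrableOn_Ioc_of_le hab]
    have hIocT' : Ioc a b ⊆ Icc (0:ℝ) T := fun s hs =>
      ⟨ha.trans hs.1.le, hs.2.trans (hb.trans ht.2)⟩
    have hA'int : IntegrableOn (A'.indicator g) (Ioc a b) :=
      Integrable.indicator (hg.mono_set hIocT') hA'meas
    apply Integrable.congr hA'int
    apply (ae_restrict_iff' measurableSet_Ioc).2
    refine Filter.Eventually.of_forall fun s hs => ?_
    have hiff := hA'mem s (hIocT' hs)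
    by_cases h : f s = F s
    · rw [Set.indicator_of_mem (hiff.2 h) g,
        Set.indicator_of_mem (show s ∈ {s : ℝ | f s = F s} from h) g]
    · rw [Set.indicator_of_notMem (fun hh => h (hiff.1 hh)) g,
        Set.indicator_of_notMem (show s ∉ {s : ℝ | f s = F s} from h) g]
  have hzero : ∫ s in r..t, Set.indicator {s : ℝ | f s = F s} g s = 0 := by
    rw [intervalIntegral.integral_of_le hrt]
    have hEq : EqOn (Set.indicator {s : ℝ | f s = F s} g) (fun _ => (0:ℝ)) (Ioc r t) := by
      intro s hs
      have hsIcc : s ∈ Icc (0:ℝ) T := ⟨hr0.trans hs.1.le, hs.2.trans ht.2⟩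
      have hne : f s ≠ F s := by
        intro h
        have hsS : s ∈ S := ⟨⟨hr0.trans hs.1.le, hs.2⟩, (hA'mem s hsIcc).2 h⟩
        exact absurd (le_csSup hSbdd hsS) (not_le.2 hs.1)
      exact Set.indicator_of_notMem (show s ∉ {s : ℝ | f s = F s} from hne) g
    rw [setIntegral_congr_fun measurableSet_Ioc hEq]
    simp
  have hsplit := intervalIntegral.integral_add_adjacent_intervals
    (hind 0 r le_rfl hr0 hrt) (hind r t hr0 hrt le_rfl)
  have hkey := key r ⟨hr0, hrT⟩ hfr
  rw [hFtr, hkey, ← hsplit, hzero, add_zero]
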